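/- Let S = {(x_i, y_i)}_{i=1}^n ⊆ ℝ × {−1,1} be a dataset with x_1 < x_2 < … < x_n, and suppose θ = (w, b, v) satisfies the KKT conditions of the maximum-margin problem for a width-k depth-2 ReLU network on S. Let 1 ≤ a < b ≤ n be such that x_b > x_a ≥ 0 and y_i = −1 for all a ≤ i ≤ b, and let ℐ'_{a,b} = {i : a ≤ i ≤ b, y_i N_θ(x_i) = 1} be enumerated as i_1 < … < i_m. Then there are at most 2 indices ℓ ∈ [m−1] such that N_θ(x) < −1 for some x ∈ [x_{i_ℓ}, x_{i_{ℓ+1}}]. -/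

import Mathlib

open Finset

/-- The ReLU activation function. -/
noncomputable def relu (z : ℝ) : ℝ := max 0 z

/-- A width-`k` depth-2 ReLU network with weights `w`, biases `b`, output weights `v`. -/
noncomputable def NNet {k : ℕ} (w b v : Fin k → ℝ) (x : ℝ) : ℝ :=
  ∑ j : Fin k, v j * relu (w j * x + b j)

/-- `θ = (w, b, v)` satisfies the KKT conditions of the maximum-margin problem
for the dataset `(x i, y i)`. -/
def IsKKT {n k : ℕ} (x y : Fin n → ℝ) (w b v : Fin k → ℝ) : Prop :=
  (∀ i, 1 ≤ y i * NNet w b v (x i)) ∧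
  ∃ (lam : Fin n → ℝ) (sg : Fin n → Fin k → ℝ),
    (∀ i, 0 ≤ lam i) ∧
    (∀ i j, sg i j ∈ Set.Icc (0 : ℝ) 1) ∧
    (∀ i j, 0 < w j * x i + b j → sg i j = 1) ∧
    (∀ i j, w j * x i + b j < 0 → sg i j = 0) ∧
    (∀ i, y i * NNet w b v (x i) ≠ 1 → lam i = 0) ∧
    (∀ j, v j ≠ 0 → w j = ∑ i, lam i * y i * v j * sg i j * x i) ∧
    (∀ j, v j ≠ 0 → b j = ∑ i, lam i * y i * v j * sg i j)

/-- `f` is locally affine at `x`: it agrees with an affine function on a neighborhood of `x`. -/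
def LocallyAffineAt (f : ℝ → ℝ) (x : ℝ) : Prop :=
  ∃ c d : ℝ, ∀ᶠ z in nhds x, f z = c * z + d

/-- `x` is an activation point of the network `(w, b, v)`. -/
def IsActivationPoint {k : ℕ} (w b v : Fin k → ℝ) (x : ℝ) : Prop :=
  ∃ j : Fin k, v j ≠ 0 ∧ w j ≠ 0 ∧ w j * x + b j = 0

/-- The derivative of `f` decreases at `x`: for all sufficiently small `ε > 0`,
the derivative at `x + ε` is smaller than the derivative at `x - ε`. -/
def DerivDecreasesAt (f : ℝ → ℝ) (x : ℝ) : Prop :=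
  ∃ ε₀ > (0 : ℝ), ∀ ε : ℝ, 0 < ε → ε < ε₀ → deriv f (x + ε) < deriv f (x - ε)

/-- The derivative of `f` increases at `x`: for all sufficiently small `ε > 0`,
the derivative at `x - ε` is smaller than the derivative at `x + ε`. -/
def DerivIncreasesAt (f : ℝ → ℝ) (x : ℝ) : Prop :=
  ∃ ε₀ > (0 : ℝ), ∀ ε : ℝ, 0 < ε → ε < ε₀ → deriv f (x - ε) < deriv f (x + ε)

/-- With `y_i = -1` on `[a, c]` and `ℐ'_{a,c} = {i : a ≤ i ≤ c, y_i N_θ(x_i) = 1}`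
enumerated by the strictly monotone `idx : Fin m → Fin n`, there are at most `2` indices `ℓ`
such that `N_θ(z) < -1` for some `z ∈ [x_{i_ℓ}, x_{i_{ℓ+1}}]`. -/
lemma concaveOn_of_affine_on (S : Set ℝ) (hS : Convex ℝ S) (f : ℝ → ℝ) (c d : ℝ)
    (hf : ∀ z ∈ S, f z = c * z + d) : ConcaveOn ℝ S f := by
  refine ⟨hS, ?_⟩
  intro p hp q hq α β hα hβ hαβ
  have hm := hS hp hq hα hβ hαβ
  rw [hf _ hp, hf _ hq, hf _ hm]
  simp only [smul_eq_mul]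
  apply le_of_eq
  linear_combination d * hαβ

lemma concaveOn_nonpos_relu (S : Set ℝ) (hS : Convex ℝ S) (vv ww bb : ℝ) (hv : vv ≤ 0) :
    ConcaveOn ℝ S (fun z => vv * relu (ww * z + bb)) := by
  refine ⟨hS, ?_⟩
  intro p hp q hq α β hα hβ hαβ
  simp only [smul_eq_mul, relu]
  have h1 : ww * (α * p + β * q) + bb = α * (ww * p + bb) + β * (ww * q + bb) := by
    linear_combination -bb * hαβ
  have h2 : max 0 (ww * (α * p + β * q) + bb)
      ≤ α * max 0 (ww * p + bb) + β * max 0 (ww * q + bb) := by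
    rw [h1]
    apply max_le
    · have := le_max_left (0:ℝ) (ww * p + bb)
      have := le_max_left (0:ℝ) (ww * q + bb)
      nlinarith
    · have := le_max_right (0:ℝ) (ww * p + bb)
      have := le_max_right (0:ℝ) (ww * q + bb)
      nlinarith
  nlinarith [mul_le_mul_of_nonpos_left h2 hv]

lemma concaveOn_finset_sum {ι : Type*} (S : Set ℝ) (hS : Convex ℝ S) (s : Finset ι)
    (f : ι → ℝ → ℝ) (h : ∀ i ∈ s, ConcaveOn ℝ S (f i)) :
    ConcaveOn ℝ S (fun z => ∑ i ∈ s, f i z) := by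
  classical
  induction s using Finset.induction with
  | empty => simpa using concaveOn_const 0 hS
  | insert a s hni ih =>
    simp only [Finset.sum_insert hni]
    exact (h a (Finset.mem_insert_self a s)).add
      (ih (fun i hi => h i (Finset.mem_insert_of_mem hi)))

lemma nnet_concave {k : ℕ} (w b v : Fin k → ℝ) (p q : ℝ) (hpq : p < q)
    (hgood : ∀ j, 0 < v j → w j ≠ 0 → ∀ s ∈ Set.Ioo p q, w j * s + b j ≠ 0) :
    ConcaveOn ℝ (Set.Icc p q) (NNet w b v) := by
  have hconv : Convex ℝ (Set.Icc p q) := convex_Icc p q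
  have : ConcaveOn ℝ (Set.Icc p q) (fun z => ∑ j : Fin k, v j * relu (w j * z + b j)) := by
    apply concaveOn_finset_sum _ hconv
    intro j _
    rcases le_or_gt (v j) 0 with hv | hv
    · exact concaveOn_nonpos_relu _ hconv _ _ _ hv
    · -- v j > 0 : the neuron is affine on [p,q]
      rcases le_or_gt 0 (w j * p + b j) with h1 | h1 <;> rcases le_or_gt 0 (w j * q + b j) with h2 | h2
      · -- nonneg at both endpoints: f = v j * (w j z + b j)
        apply concaveOn_of_affine_on _ hconv _ (v j * w j) (v j * b j)
        intro z hz
        have hnn : 0 ≤ w j * z + b j := by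
          rcases hz with ⟨hz1, hz2⟩
          nlinarith [mul_nonneg (sub_nonneg.2 hz2) h1, mul_nonneg (sub_nonneg.2 hz1) h2]
        rw [relu, max_eq_right hnn]; ring
      · -- h1 ≥ 0, h2 < 0
        rcases eq_or_lt_of_le h1 with h1e | h1s
        · -- w j * p + b j = 0, decreasing: f = 0 on [p,q]
          apply concaveOn_of_affine_on _ hconv _ 0 0
          intro z hz
          have hnp : w j * z + b j ≤ 0 := by
            rcases hz with ⟨hz1, hz2⟩
            have hz0 : (q - z) * (w j * p + b j) = 0 := by rw [← h1e]; ring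
            nlinarith [hz0, mul_nonpos_of_nonneg_of_nonpos (sub_nonneg.2 hz1) h2.le]
          rw [relu, max_eq_left hnp]; ring
        · exfalso
          have hw0 : w j ≠ 0 := by
            intro h0; rw [h0] at h1s h2; simp at h1s h2; linarith
          have hroot : w j * (-(b j) / w j) + b j = 0 := by field_simp; ring
          apply hgood j hv hw0 (-(b j)/ w j) _ hroot
          have e1 : 0 < w j * (p - (-(b j)/w j)) := by
            have : w j * (p - (-(b j)/w j)) = w j * p + b j := by field_simp; ring
            linarith
          have e2 : w j * (q - (-(b j)/w j)) < 0 := by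
            have : w j * (q - (-(b j)/w j)) = w j * q + b j := by field_simp; ring
            linarith
          rcases lt_trichotomy (w j) 0 with hw | hw | hw
          · constructor <;> nlinarith
          · exact absurd hw hw0
          · exfalso; nlinarith
      · -- h1 < 0, h2 ≥ 0
        rcases eq_or_lt_of_le h2 with h2e | h2s
        · apply concaveOn_of_affine_on _ hconv _ 0 0
          intro z hz
          have hnp : w j * z + b j ≤ 0 := by
            rcases hz with ⟨hz1, hz2⟩
            have hz0 : (z - p) * (w j * q + b j) = 0 := by rw [← h2e]; ring
            nlinarith [hz0, mul_nonpos_of_nonneg_of_nonpos (sub_nonneg.2 hz2) h1.le]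
          rw [relu, max_eq_left hnp]; ring
        · exfalso
          have hw0 : w j ≠ 0 := by
            intro h0; rw [h0] at h1 h2s; simp at h1 h2s; linarith
          have hroot : w j * (-(b j) / w j) + b j = 0 := by field_simp; ring
          apply hgood j hv hw0 (-(b j)/ w j) _ hroot
          have e1 : w j * (p - (-(b j)/w j)) < 0 := by
            have : w j * (p - (-(b j)/w j)) = w j * p + b j := by field_simp; ring
            linarith
          have e2 : 0 < w j * (q - (-(b j)/w j)) := by
            have : w j * (q - (-(b j)/w j)) = w j * q + b j := by field_simp; ring
            linarith
          rcases lt_trichotomy (w j) 0 with hw | hw | hw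
          · exfalso; nlinarith
          · exact absurd hw hw0
          · constructor <;> nlinarith
      · -- both negative: f = 0 on [p,q]
        apply concaveOn_of_affine_on _ hconv _ 0 0
        intro z hz
        have hnp : w j * z + b j ≤ 0 := by
          rcases hz with ⟨hz1, hz2⟩
          nlinarith [mul_nonpos_of_nonneg_of_nonpos (sub_nonneg.2 hz2) h1.le,
            mul_nonpos_of_nonneg_of_nonpos (sub_nonneg.2 hz1) h2.le]
        rw [relu, max_eq_left hnp]; ring
  exact this

lemma nnet_ge {k : ℕ} (w b v : Fin k → ℝ) (p q : ℝ) (hpq : p < q)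
    (hgood : ∀ j, 0 < v j → w j ≠ 0 → ∀ s ∈ Set.Ioo p q, w j * s + b j ≠ 0)
    (hNp : NNet w b v p = -1) (hNq : NNet w b v q = -1) :
    ∀ z ∈ Set.Icc p q, -1 ≤ NNet w b v z := by
  have hc := nnet_concave w b v p q hpq hgood
  intro z hz
  rcases hz with ⟨hz1, hz2⟩
  have hd : 0 < q - p := by linarith
  set α := (q - z) / (q - p) with hα_def
  set β := (z - p) / (q - p) with hβ_def
  have hα : 0 ≤ α := div_nonneg (by linarith) (by linarith)
  have hβ : 0 ≤ β := div_nonneg (by linarith) (by linarith)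
  have hαβ : α + β = 1 := by rw [hα_def, hβ_def]; field_simp; ring
  have hcomb : α • p + β • q = z := by
    simp only [smul_eq_mul, hα_def, hβ_def]; field_simp; ring
  have := hc.2 (Set.mem_Icc.2 ⟨le_refl p, le_of_lt hpq⟩)
    (Set.mem_Icc.2 ⟨le_of_lt hpq, le_refl q⟩) hα hβ hαβ
  rw [hcomb, hNp, hNq] at this
  have h2 : α * (-1) + β * (-1) ≤ NNet w b v z := by simpa using this
  nlinarith

lemma keyPos {n k : ℕ} (x y : Fin n → ℝ)
    (w b v : Fin k → ℝ) (lam : Fin n → ℝ) (sg : Fin n → Fin k → ℝ)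
    (hlam : ∀ i, 0 ≤ lam i)
    (hsgp : ∀ i j, 0 < w j * x i + b j → sg i j = 1)
    (hsgn : ∀ i j, w j * x i + b j < 0 → sg i j = 0)
    (hw : ∀ j, v j ≠ 0 → w j = ∑ i, lam i * y i * v j * sg i j * x i)
    (hb : ∀ j, v j ≠ 0 → b j = ∑ i, lam i * y i * v j * sg i j)
    (t t' : ℝ) (ht0 : 0 < t) (htt' : t < t')
    (hmid : ∀ i, t < x i → x i ≤ t' → y i = -1)
    (hlz : ∀ i, x i = t → lam i = 0) (hlz' : ∀ i, x i = t' → lam i = 0)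
    (j j' : Fin k) (hvj : 0 < v j) (hwj : 0 < w j) (hvj' : 0 < v j') (hwj' : 0 < w j')
    (hbt : w j * t + b j = 0) (hbt' : w j' * t' + b j' = 0) : False := by
  -- characterization of contributing terms, for a generic (neuron, breakpoint)
  have hchar : ∀ (jj : Fin k) (s : ℝ), 0 < w jj → w jj * s + b jj = 0 →
      (∀ i, x i = s → lam i = 0) →
      ∀ i, lam i * y i * sg i jj = if s < x i then lam i * y i else 0 := by
    intro jj s hwjj hbs hlzs i
    rcases lt_trichotomy (x i) s with h | h | h
    · have hneg : w jj * x i + b jj < 0 := by nlinarith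
      rw [hsgn i jj hneg, if_neg (by linarith)]; ring
    · rw [hlzs i h, if_neg (by rw [h]; exact lt_irrefl s)]; ring
    · have hpos : 0 < w jj * x i + b jj := by nlinarith
      rw [hsgp i jj hpos, if_pos h]; ring
  -- the two sum identities for a generic (neuron, breakpoint)
  have hGA : ∀ (jj : Fin k) (s : ℝ), 0 < v jj → 0 < w jj → w jj * s + b jj = 0 →
      (∀ i, x i = s → lam i = 0) →
      (∑ i, (if s < x i then lam i * y i * (x i * s + 1) else 0)) = 0 ∧
      0 < ∑ i, (if s < x i then lam i * y i * x i else 0) := by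
    intro jj s hvjj hwjj hbs hlzs
    have hvne : v jj ≠ 0 := ne_of_gt hvjj
    have hchr := hchar jj s hwjj hbs hlzs
    have eG : v jj * (∑ i, (if s < x i then lam i * y i * (x i * s + 1) else 0)) = 0 := by
      rw [Finset.mul_sum]
      have : ∀ i ∈ Finset.univ, v jj * (if s < x i then lam i * y i * (x i * s + 1) else 0)
          = lam i * y i * v jj * sg i jj * x i * s + lam i * y i * v jj * sg i jj := by
        intro i _
        have h2 : lam i * y i * v jj * sg i jj * x i * s + lam i * y i * v jj * sg i jj
            = v jj * ((lam i * y i * sg i jj) * (x i * s + 1)) := by ring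
        rw [h2, hchr i]
        by_cases h : s < x i <;> simp [h] <;> ring
      rw [Finset.sum_congr rfl this, Finset.sum_add_distrib, ← Finset.sum_mul,
        ← hw jj hvne, ← hb jj hvne, hbs]
    have eA : v jj * (∑ i, (if s < x i then lam i * y i * x i else 0)) = w jj := by
      rw [Finset.mul_sum]
      have : ∀ i ∈ Finset.univ, v jj * (if s < x i then lam i * y i * x i else 0)
          = lam i * y i * v jj * sg i jj * x i := by
        intro i _
        have h2 : lam i * y i * v jj * sg i jj * x i
            = v jj * ((lam i * y i * sg i jj) * x i) := by ring
        rw [h2, hchr i]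
        by_cases h : s < x i <;> simp [h] <;> ring
      rw [Finset.sum_congr rfl this, ← hw jj hvne]
    constructor
    · rcases mul_eq_zero.1 eG with h | h
      · exact absurd h hvne
      · exact h
    · nlinarith
  obtain ⟨eG, hA⟩ := hGA j t hvj hwj hbt hlz
  obtain ⟨eG', hA'⟩ := hGA j' t' hvj' hwj' hbt' hlz'
  -- decomposition identity
  have e2 : (∑ i, (if t < x i then lam i * y i * (x i * t + 1) else 0))
      = (∑ i, (if t' < x i then lam i * y i * (x i * t' + 1) else 0))
        + (t - t') * (∑ i, (if t' < x i then lam i * y i * x i else 0))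
        + ∑ i, (if t < x i ∧ x i ≤ t' then lam i * y i * (x i * t + 1) else 0) := by
    rw [Finset.mul_sum, ← Finset.sum_add_distrib, ← Finset.sum_add_distrib]
    apply Finset.sum_congr rfl
    intro i _
    by_cases h1 : t' < x i
    · have h2 : t < x i := htt'.trans h1
      rw [if_pos h1, if_pos h1, if_pos h2, if_neg (by rintro ⟨-, hc⟩; exact absurd h1 (not_lt.2 hc))]
      ring
    · by_cases h2 : t < x i
      · rw [if_pos h2, if_neg h1, if_neg h1, if_pos ⟨h2, not_lt.1 h1⟩]
        ring
      · rw [if_neg h1, if_neg h1, if_neg h2, if_neg (by rintro ⟨hc, -⟩; exact h2 hc)]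
        ring
  have hM : (∑ i, (if t < x i ∧ x i ≤ t' then lam i * y i * (x i * t + 1) else 0)) ≤ 0 := by
    apply Finset.sum_nonpos
    intro i _
    split_ifs with h
    · obtain ⟨h1, h2⟩ := h
      rw [hmid i h1 h2]
      have hx1 : 0 < x i * t + 1 := by nlinarith
      nlinarith [hlam i]
    · exact le_refl 0
  have hneg : (t - t') * (∑ i, (if t' < x i then lam i * y i * x i else 0)) < 0 :=
    mul_neg_of_neg_of_pos (by linarith) hA'
  rw [eG, eG'] at e2
  linarith

lemma keyNeg {n k : ℕ} (x y : Fin n → ℝ)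
    (w b v : Fin k → ℝ) (lam : Fin n → ℝ) (sg : Fin n → Fin k → ℝ)
    (hlam : ∀ i, 0 ≤ lam i)
    (hsgp : ∀ i j, 0 < w j * x i + b j → sg i j = 1)
    (hsgn : ∀ i j, w j * x i + b j < 0 → sg i j = 0)
    (hw : ∀ j, v j ≠ 0 → w j = ∑ i, lam i * y i * v j * sg i j * x i)
    (hb : ∀ j, v j ≠ 0 → b j = ∑ i, lam i * y i * v j * sg i j)
    (t t' : ℝ) (ht0 : 0 < t) (htt' : t < t')
    (hmid : ∀ i, t ≤ x i → x i < t' → y i = -1)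
    (hlz : ∀ i, x i = t → lam i = 0) (hlz' : ∀ i, x i = t' → lam i = 0)
    (j j' : Fin k) (hvj : 0 < v j) (hwj : w j < 0) (hvj' : 0 < v j') (hwj' : w j' < 0)
    (hbt : w j * t + b j = 0) (hbt' : w j' * t' + b j' = 0) : False := by
  have hchar : ∀ (jj : Fin k) (s : ℝ), w jj < 0 → w jj * s + b jj = 0 →
      (∀ i, x i = s → lam i = 0) →
      ∀ i, lam i * y i * sg i jj = if x i < s then lam i * y i else 0 := by
    intro jj s hwjj hbs hlzs i
    rcases lt_trichotomy (x i) s with h | h | h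
    · have hpos : 0 < w jj * x i + b jj := by nlinarith
      rw [hsgp i jj hpos, if_pos h]; ring
    · rw [hlzs i h, if_neg (by rw [h]; exact lt_irrefl s)]; ring
    · have hneg : w jj * x i + b jj < 0 := by nlinarith
      rw [hsgn i jj hneg, if_neg (by linarith)]; ring
  have hGA : ∀ (jj : Fin k) (s : ℝ), 0 < v jj → w jj < 0 → w jj * s + b jj = 0 →
      (∀ i, x i = s → lam i = 0) →
      (∑ i, (if x i < s then lam i * y i * (x i * s + 1) else 0)) = 0 ∧
      (∑ i, (if x i < s then lam i * y i * x i else 0)) < 0 := by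
    intro jj s hvjj hwjj hbs hlzs
    have hvne : v jj ≠ 0 := ne_of_gt hvjj
    have hchr := hchar jj s hwjj hbs hlzs
    have eG : v jj * (∑ i, (if x i < s then lam i * y i * (x i * s + 1) else 0)) = 0 := by
      rw [Finset.mul_sum]
      have : ∀ i ∈ Finset.univ, v jj * (if x i < s then lam i * y i * (x i * s + 1) else 0)
          = lam i * y i * v jj * sg i jj * x i * s + lam i * y i * v jj * sg i jj := by
        intro i _
        have h2 : lam i * y i * v jj * sg i jj * x i * s + lam i * y i * v jj * sg i jj
            = v jj * ((lam i * y i * sg i jj) * (x i * s + 1)) := by ring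
        rw [h2, hchr i]
        by_cases h : x i < s <;> simp [h] <;> ring
      rw [Finset.sum_congr rfl this, Finset.sum_add_distrib, ← Finset.sum_mul,
        ← hw jj hvne, ← hb jj hvne, hbs]
    have eA : v jj * (∑ i, (if x i < s then lam i * y i * x i else 0)) = w jj := by
      rw [Finset.mul_sum]
      have : ∀ i ∈ Finset.univ, v jj * (if x i < s then lam i * y i * x i else 0)
          = lam i * y i * v jj * sg i jj * x i := by
        intro i _
        have h2 : lam i * y i * v jj * sg i jj * x i
            = v jj * ((lam i * y i * sg i jj) * x i) := by ring
        rw [h2, hchr i]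
        by_cases h : x i < s <;> simp [h] <;> ring
      rw [Finset.sum_congr rfl this, ← hw jj hvne]
    constructor
    · rcases mul_eq_zero.1 eG with h | h
      · exact absurd h hvne
      · exact h
    · nlinarith
  obtain ⟨eG, hA⟩ := hGA j t hvj hwj hbt hlz
  obtain ⟨eG', hA'⟩ := hGA j' t' hvj' hwj' hbt' hlz'
  have e2 : (∑ i, (if x i < t' then lam i * y i * (x i * t' + 1) else 0))
      = (∑ i, (if x i < t then lam i * y i * (x i * t + 1) else 0))
        + (t' - t) * (∑ i, (if x i < t then lam i * y i * x i else 0))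
        + ∑ i, (if t ≤ x i ∧ x i < t' then lam i * y i * (x i * t' + 1) else 0) := by
    rw [Finset.mul_sum, ← Finset.sum_add_distrib, ← Finset.sum_add_distrib]
    apply Finset.sum_congr rfl
    intro i _
    by_cases h1 : x i < t
    · have h2 : x i < t' := h1.trans htt'
      rw [if_pos h2, if_pos h1, if_pos h1, if_neg (by rintro ⟨hc, -⟩; exact absurd h1 (not_lt.2 hc))]
      ring
    · by_cases h2 : x i < t'
      · rw [if_pos h2, if_neg h1, if_neg h1, if_pos ⟨not_lt.1 h1, h2⟩]
        ring
      · rw [if_neg h2, if_neg h1, if_neg h1, if_neg (by rintro ⟨-, hc⟩; exact h2 hc)]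
        ring
  have hM : (∑ i, (if t ≤ x i ∧ x i < t' then lam i * y i * (x i * t' + 1) else 0)) ≤ 0 := by
    apply Finset.sum_nonpos
    intro i _
    split_ifs with h
    · obtain ⟨h1, h2⟩ := h
      rw [hmid i h1 h2]
      have hx1 : 0 < x i * t' + 1 := by nlinarith
      nlinarith [hlam i]
    · exact le_refl 0
  have hneg : (t' - t) * (∑ i, (if x i < t then lam i * y i * x i else 0)) < 0 :=
    mul_neg_of_pos_of_neg (by linarith) hA
  rw [eG, eG'] at e2
  linarith

theorem stmt7 {n k : ℕ} (x y : Fin n → ℝ)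
    (hx : StrictMono x) (hy : ∀ i, y i = 1 ∨ y i = -1)
    (w b v : Fin k → ℝ) (hKKT : IsKKT x y w b v)
    (a c : Fin n) (hac : a < c) (ha : 0 ≤ x a) (hxac : x a < x c)
    (hyac : ∀ i, a ≤ i → i ≤ c → y i = -1)
    (m : ℕ) (idx : Fin m → Fin n) (hmono : StrictMono idx)
    (hrange : ∀ i : Fin n,
      (a ≤ i ∧ i ≤ c ∧ y i * NNet w b v (x i) = 1) ↔ i ∈ Set.range idx) :
    {ℓ : ℕ | ∃ h : ℓ + 1 < m,
      ∃ z ∈ Set.Icc (x (idx ⟨ℓ, Nat.lt_of_succ_lt h⟩)) (x (idx ⟨ℓ + 1, h⟩)),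
        NNet w b v z < -1}.encard ≤ 2 := by
  classical
  obtain ⟨hmargin, lam, sg, hlam, hsg01, hsgp, hsgn, hcomp, hw, hb⟩ := hKKT
  have F1 : ∀ r : Fin m, a ≤ idx r ∧ idx r ≤ c ∧ NNet w b v (x (idx r)) = -1 := by
    intro r
    have h := (hrange (idx r)).2 ⟨r, rfl⟩
    refine ⟨h.1, h.2.1, ?_⟩
    have hyr : y (idx r) = -1 := hyac _ h.1 h.2.1
    have h3 := h.2.2
    rw [hyr] at h3
    linarith
  have F2 : ∀ (ℓ : ℕ) (h : ℓ + 1 < m) (i : Fin n),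
      x (idx ⟨ℓ, Nat.lt_of_succ_lt h⟩) < x i → x i < x (idx ⟨ℓ + 1, h⟩) → lam i = 0 := by
    intro ℓ h i h1 h2
    have hpi : idx ⟨ℓ, Nat.lt_of_succ_lt h⟩ < i := hx.lt_iff_lt.1 h1
    have hiq : i < idx ⟨ℓ + 1, h⟩ := hx.lt_iff_lt.1 h2
    have hai : a ≤ i := le_of_lt (lt_of_le_of_lt (F1 _).1 hpi)
    have hic : i ≤ c := le_of_lt (lt_of_lt_of_le hiq (F1 _).2.1)
    apply hcomp
    intro hcon
    obtain ⟨r, hr⟩ := (hrange i).1 ⟨hai, hic, hcon⟩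
    have h3 : (⟨ℓ, Nat.lt_of_succ_lt h⟩ : Fin m) < r := hmono.lt_iff_lt.1 (by rw [hr]; exact hpi)
    have h4 : r < (⟨ℓ + 1, h⟩ : Fin m) := hmono.lt_iff_lt.1 (by rw [hr]; exact hiq)
    rw [Fin.lt_def] at h3 h4
    simp at h3 h4
    omega
  -- the two "bad witness" sets
  have hsub : {ℓ : ℕ | ∃ h : ℓ + 1 < m,
      ∃ z ∈ Set.Icc (x (idx ⟨ℓ, Nat.lt_of_succ_lt h⟩)) (x (idx ⟨ℓ + 1, h⟩)),
        NNet w b v z < -1} ⊆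
      {ℓ : ℕ | ∃ h : ℓ + 1 < m, ∃ j t, 0 < v j ∧ 0 < w j ∧ w j * t + b j = 0 ∧
        x (idx ⟨ℓ, Nat.lt_of_succ_lt h⟩) < t ∧ t < x (idx ⟨ℓ + 1, h⟩)} ∪
      {ℓ : ℕ | ∃ h : ℓ + 1 < m, ∃ j t, 0 < v j ∧ w j < 0 ∧ w j * t + b j = 0 ∧
        x (idx ⟨ℓ, Nat.lt_of_succ_lt h⟩) < t ∧ t < x (idx ⟨ℓ + 1, h⟩)} := by
    rintro ℓ ⟨h, z, hz, hNz⟩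
    have hpq : x (idx ⟨ℓ, Nat.lt_of_succ_lt h⟩) < x (idx ⟨ℓ + 1, h⟩) := by
      apply hx
      apply hmono
      rw [Fin.lt_def]
      simp
    by_contra hn
    rw [Set.mem_union] at hn
    push_neg at hn
    have hgood : ∀ jj, 0 < v jj → w jj ≠ 0 →
        ∀ s ∈ Set.Ioo (x (idx ⟨ℓ, Nat.lt_of_succ_lt h⟩)) (x (idx ⟨ℓ + 1, h⟩)),
          w jj * s + b jj ≠ 0 := by
      intro jj hv hwne s hs hbs
      rcases hwne.lt_or_gt with hwneg | hwpos
      · exact hn.2 ⟨h, jj, s, hv, hwneg, hbs, hs.1, hs.2⟩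
      · exact hn.1 ⟨h, jj, s, hv, hwpos, hbs, hs.1, hs.2⟩
    have := nnet_ge w b v _ _ hpq hgood (F1 _).2.2 (F1 _).2.2 z hz
    linarith
  have key1 : ∀ ℓ ℓ' : ℕ, ℓ < ℓ' →
      (∃ h : ℓ + 1 < m, ∃ j t, 0 < v j ∧ 0 < w j ∧ w j * t + b j = 0 ∧
        x (idx ⟨ℓ, Nat.lt_of_succ_lt h⟩) < t ∧ t < x (idx ⟨ℓ + 1, h⟩)) →
      (∃ h : ℓ' + 1 < m, ∃ j t, 0 < v j ∧ 0 < w j ∧ w j * t + b j = 0 ∧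
        x (idx ⟨ℓ', Nat.lt_of_succ_lt h⟩) < t ∧ t < x (idx ⟨ℓ' + 1, h⟩)) → False := by
    rintro ℓ ℓ' hll ⟨h, j, t, hvj, hwj, hbt, ht1, ht2⟩ ⟨h', j', t', hvj', hwj', hbt', ht1', ht2'⟩
    have hle : (⟨ℓ + 1, h⟩ : Fin m) ≤ ⟨ℓ', Nat.lt_of_succ_lt h'⟩ := by
      rw [Fin.le_def]; simp; omega
    have hxle : x (idx ⟨ℓ + 1, h⟩) ≤ x (idx ⟨ℓ', Nat.lt_of_succ_lt h'⟩) :=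
      hx.monotone (hmono.monotone hle)
    have htt' : t < t' := lt_of_lt_of_le ht2 (le_trans hxle (le_of_lt ht1'))
    have hxa : x a ≤ x (idx ⟨ℓ, Nat.lt_of_succ_lt h⟩) := hx.monotone (F1 _).1
    have ht0 : 0 < t := lt_of_le_of_lt (le_trans ha hxa) ht1
    have hmid : ∀ i, t < x i → x i ≤ t' → y i = -1 := by
      intro i hti hit'
      have hpi : idx ⟨ℓ, Nat.lt_of_succ_lt h⟩ < i := hx.lt_iff_lt.1 (lt_trans ht1 hti)
      have hiq : i < idx ⟨ℓ' + 1, h'⟩ := hx.lt_iff_lt.1 (lt_of_le_of_lt hit' ht2')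
      exact hyac i (le_of_lt (lt_of_le_of_lt (F1 _).1 hpi))
        (le_of_lt (lt_of_lt_of_le hiq (F1 (⟨ℓ' + 1, h'⟩ : Fin m)).2.1))
    exact keyPos x y w b v lam sg hlam hsgp hsgn hw hb t t' ht0 htt' hmid
      (fun i hi => F2 ℓ h i (by rw [hi]; exact ht1) (by rw [hi]; exact ht2))
      (fun i hi => F2 ℓ' h' i (by rw [hi]; exact ht1') (by rw [hi]; exact ht2'))
      j j' hvj hwj hvj' hwj' hbt hbt'
  have key2 : ∀ ℓ ℓ' : ℕ, ℓ < ℓ' →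
      (∃ h : ℓ + 1 < m, ∃ j t, 0 < v j ∧ w j < 0 ∧ w j * t + b j = 0 ∧
        x (idx ⟨ℓ, Nat.lt_of_succ_lt h⟩) < t ∧ t < x (idx ⟨ℓ + 1, h⟩)) →
      (∃ h : ℓ' + 1 < m, ∃ j t, 0 < v j ∧ w j < 0 ∧ w j * t + b j = 0 ∧
        x (idx ⟨ℓ', Nat.lt_of_succ_lt h⟩) < t ∧ t < x (idx ⟨ℓ' + 1, h⟩)) → False := by
    rintro ℓ ℓ' hll ⟨h, j, t, hvj, hwj, hbt, ht1, ht2⟩ ⟨h', j', t', hvj', hwj', hbt', ht1', ht2'⟩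
    have hle : (⟨ℓ + 1, h⟩ : Fin m) ≤ ⟨ℓ', Nat.lt_of_succ_lt h'⟩ := by
      rw [Fin.le_def]; simp; omega
    have hxle : x (idx ⟨ℓ + 1, h⟩) ≤ x (idx ⟨ℓ', Nat.lt_of_succ_lt h'⟩) :=
      hx.monotone (hmono.monotone hle)
    have htt' : t < t' := lt_of_lt_of_le ht2 (le_trans hxle (le_of_lt ht1'))
    have hxa : x a ≤ x (idx ⟨ℓ, Nat.lt_of_succ_lt h⟩) := hx.monotone (F1 _).1
    have ht0 : 0 < t := lt_of_le_of_lt (le_trans ha hxa) ht1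
    have hmid : ∀ i, t ≤ x i → x i < t' → y i = -1 := by
      intro i hti hit'
      have hpi : idx ⟨ℓ, Nat.lt_of_succ_lt h⟩ < i := hx.lt_iff_lt.1 (lt_of_lt_of_le ht1 hti)
      have hiq : i < idx ⟨ℓ' + 1, h'⟩ := hx.lt_iff_lt.1 (lt_trans hit' ht2')
      exact hyac i (le_of_lt (lt_of_le_of_lt (F1 _).1 hpi))
        (le_of_lt (lt_of_lt_of_le hiq (F1 (⟨ℓ' + 1, h'⟩ : Fin m)).2.1))
    exact keyNeg x y w b v lam sg hlam hsgp hsgn hw hb t t' ht0 htt' hmid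
      (fun i hi => F2 ℓ h i (by rw [hi]; exact ht1) (by rw [hi]; exact ht2))
      (fun i hi => F2 ℓ' h' i (by rw [hi]; exact ht1') (by rw [hi]; exact ht2'))
      j j' hvj hwj hvj' hwj' hbt hbt'
  have hT1 : {ℓ : ℕ | ∃ h : ℓ + 1 < m, ∃ j t, 0 < v j ∧ 0 < w j ∧ w j * t + b j = 0 ∧
        x (idx ⟨ℓ, Nat.lt_of_succ_lt h⟩) < t ∧ t < x (idx ⟨ℓ + 1, h⟩)}.encard ≤ 1 := by
    rw [Set.encard_le_one_iff]
    intro ℓ ℓ' hℓ hℓ'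
    rcases lt_trichotomy ℓ ℓ' with hlt | heq | hgt
    · exact absurd (key1 ℓ ℓ' hlt hℓ hℓ') not_false
    · exact heq
    · exact absurd (key1 ℓ' ℓ hgt hℓ' hℓ) not_false
  have hT2 : {ℓ : ℕ | ∃ h : ℓ + 1 < m, ∃ j t, 0 < v j ∧ w j < 0 ∧ w j * t + b j = 0 ∧
        x (idx ⟨ℓ, Nat.lt_of_succ_lt h⟩) < t ∧ t < x (idx ⟨ℓ + 1, h⟩)}.encard ≤ 1 := by
    rw [Set.encard_le_one_iff]
    intro ℓ ℓ' hℓ hℓ'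
    rcases lt_trichotomy ℓ ℓ' with hlt | heq | hgt
    · exact absurd (key2 ℓ ℓ' hlt hℓ hℓ') not_false
    · exact heq
    · exact absurd (key2 ℓ' ℓ hgt hℓ' hℓ) not_false
  calc ({ℓ : ℕ | ∃ h : ℓ + 1 < m,
      ∃ z ∈ Set.Icc (x (idx ⟨ℓ, Nat.lt_of_succ_lt h⟩)) (x (idx ⟨ℓ + 1, h⟩)),
        NNet w b v z < -1}).encard
      ≤ ({ℓ : ℕ | ∃ h : ℓ + 1 < m, ∃ j t, 0 < v j ∧ 0 < w j ∧ w j * t + b j = 0 ∧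
        x (idx ⟨ℓ, Nat.lt_of_succ_lt h⟩) < t ∧ t < x (idx ⟨ℓ + 1, h⟩)} ∪
      {ℓ : ℕ | ∃ h : ℓ + 1 < m, ∃ j t, 0 < v j ∧ w j < 0 ∧ w j * t + b j = 0 ∧
        x (idx ⟨ℓ, Nat.lt_of_succ_lt h⟩) < t ∧ t < x (idx ⟨ℓ + 1, h⟩)}).encard :=
        Set.encard_mono hsub
    _ ≤ _ + _ := Set.encard_union_le _ _
    _ ≤ 1 + 1 := add_le_add hT1 hT2
    _ = 2 := by norm_num
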